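/- arXiv:2407.03515 — 4 statements merged into one kernel-verified Lean document; each statement's English description precedes it below -/
import Mathlib

section
/- For nonnegative integers p, n, f with 1 ≤ n ≤ p and f ≤ n-1, the sum over k from 0 to p-n of C(p-n, k) / (p * C(p-1, f+k)) equals 1 / (n * C(n-1, f)), where the division is over the rationals. -/
open Finset

lemma qshap_key (a b : ℕ) (h : a ≤ b) :
    ((b.choose a : ℚ))⁻¹ = a.factorial * (b - a).factorial / b.factorial := by
  have hid : b.choose a * a.factorial * (b - a).factorial = b.factorial :=
    Nat.choose_mul_factorial_mul_factorial h
  have hb : ((b.choose a : ℚ)) * a.factorial * (b - a).factorial = b.factorial := by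
    exact_mod_cast hid
  have hc : (b.choose a : ℚ) ≠ 0 := Nat.cast_ne_zero.mpr (Nat.choose_pos h).ne'
  have hfb : (b.factorial : ℚ) ≠ 0 := Nat.cast_ne_zero.mpr b.factorial_ne_zero
  field_simp
  linarith [hb]

lemma qshap_aux (q j : ℕ) (hj : j ≤ q) :
    (1:ℚ)/(((q:ℚ)+2) * ((q+1).choose j)) + 1/(((q:ℚ)+2) * ((q+1).choose (j+1)))
      = 1/(((q:ℚ)+1) * (q.choose j)) := by
  have h1 : j ≤ q + 1 := by omega
  have h2 : j + 1 ≤ q + 1 := by omega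
  rw [one_div, one_div, one_div, mul_inv, mul_inv, mul_inv,
    qshap_key j (q+1) h1, qshap_key (j+1) (q+1) h2, qshap_key j q hj]
  have e1 : q + 1 - j = (q - j) + 1 := by omega
  have e2 : q + 1 - (j+1) = q - j := by omega
  rw [e1, e2, Nat.factorial_succ (q - j), Nat.factorial_succ j,
    Nat.factorial_succ q]
  have ec : ((q - j : ℕ) : ℚ) = (q:ℚ) - j := by
    exact Nat.cast_sub (by exact_mod_cast hj)
  have h2q : ((q:ℚ)+2) ≠ 0 := by positivity
  have h1q : ((q:ℚ)+1) ≠ 0 := by positivity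
  have hfq : (q.factorial : ℚ) ≠ 0 := Nat.cast_ne_zero.mpr q.factorial_ne_zero
  push_cast [ec]
  field_simp
  ring

lemma qshap_main (m n f : ℕ) (hn : 1 ≤ n) (hf : f ≤ n - 1) :
    ∑ k ∈ Finset.range (m + 1),
      (m.choose k : ℚ) / ((n + m : ℕ) * ((n + m - 1).choose (f + k)))
      = 1 / (n * (n - 1).choose f) := by
  induction m with
  | zero => simp
  | succ m ih =>
    have key := Finset.sum_choose_succ_mul
      (fun i _ => (1:ℚ) / ((n + (m+1) : ℕ) * ((n + (m+1) - 1).choose (f + i)))) m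
    have lhs_eq : ∑ k ∈ Finset.range (m + 1 + 1),
        ((m+1).choose k : ℚ) / ((n + (m+1) : ℕ) * ((n + (m+1) - 1).choose (f + k)))
        = ∑ i ∈ Finset.range (m+1), (m.choose i : ℚ) *
            ((1:ℚ) / ((n + (m+1) : ℕ) * ((n + (m+1) - 1).choose (f + i)))
             + 1 / ((n + (m+1) : ℕ) * ((n + (m+1) - 1).choose (f + (i+1))))) := by
      simp only [div_eq_mul_one_div ((Nat.choose _ _ : ℚ))]
      rw [show m + 1 + 1 = m + 2 from rfl, key, ← Finset.sum_add_distrib]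
      apply Finset.sum_congr rfl; intro i _; ring
    rw [lhs_eq]
    have step : ∀ i ∈ Finset.range (m+1),
        (m.choose i : ℚ) *
          ((1:ℚ) / ((n + (m+1) : ℕ) * ((n + (m+1) - 1).choose (f + i)))
           + 1 / ((n + (m+1) : ℕ) * ((n + (m+1) - 1).choose (f + (i+1)))))
        = (m.choose i : ℚ) / ((n + m : ℕ) * ((n + m - 1).choose (f + i))) := by
      intro i hi
      simp only [Finset.mem_range] at hi
      obtain ⟨q, hq⟩ : ∃ q, n + m - 1 = q := ⟨n + m - 1, rfl⟩
      have hq1 : n + (m+1) - 1 = q + 1 := by omega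
      have hq2 : n + (m+1) = q + 2 := by omega
      have hq3 : n + m = q + 1 := by omega
      have hjq : f + i ≤ q := by omega
      have := qshap_aux q (f + i) hjq
      rw [hq1, hq2, hq, hq3]
      rw [show f + (i+1) = f + i + 1 from rfl]
      push_cast
      push_cast at this
      rw [this]
      ring
    rw [Finset.sum_congr rfl step, ih]

theorem qshap_prop1 (p n f : ℕ) (hn : 1 ≤ n) (hnp : n ≤ p) (hf : f ≤ n - 1) :
    ∑ k ∈ Finset.range (p - n + 1),
      ((p - n).choose k : ℚ) / (p * (p - 1).choose (f + k))
      = 1 / (n * (n - 1).choose f) := by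
  have := qshap_main (p - n) n f hn hf
  rw [show n + (p - n) = p by omega] at this
  exact this
end

section
/- For nonnegative integers f and k, C(f+k, k) * C(k, k) = C(f+k, f); more generally, in the proof of the Gould identity, for integers p, n, f, k with the constraints 0 ≤ k ≤ p-n, the summand C(f+k,k)*C(p-1-f-k, p-n-k) can be rewritten so that the sum is independent of f: the sum over k from 0 to p-n of C(f+k,k)*C(p-1-f-k,p-n-k) is independent of f for 0 ≤ f ≤ n-1. -/
lemma gould_key (r : ℕ) : ∀ s m : ℕ,
    ∑ k ∈ Finset.range (m + 1), (r + k).choose k * (s + (m - k)).choose (m - k)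
      = (r + s + m + 1).choose m := by
  intro s
  induction s with
  | zero =>
    intro m
    have h : ∀ k ∈ Finset.range (m + 1),
        (r + k).choose k * (0 + (m - k)).choose (m - k) = (k + r).choose r := by
      intro k _
      rw [zero_add, Nat.choose_self, mul_one, add_comm r k, Nat.choose_symm_add]
    rw [Finset.sum_congr rfl h, Nat.sum_range_add_choose m r]
    rw [show m + r + 1 = (r + 1) + m by ring, Nat.choose_symm_add]
    congr 1
    omega
  | succ s ihs =>
    intro m
    induction m with
    | zero => simp
    | succ m ihm =>
      have pascal : ∀ a j : ℕ, ((a + 1) + (j + 1)).choose (j + 1)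
          = (a + (j + 1)).choose (j + 1) + ((a + 1) + j).choose j := by
        intro a j
        rw [show (a + 1) + (j + 1) = (a + j + 1) + 1 by ring, Nat.choose_succ_succ,
          add_comm]
        congr 2; ring
      have hterm : ∀ k ∈ Finset.range (m + 1),
          (r + k).choose k * ((s + 1) + (m + 1 - k)).choose (m + 1 - k)
          = (r + k).choose k * (s + (m + 1 - k)).choose (m + 1 - k)
            + (r + k).choose k * ((s + 1) + (m - k)).choose (m - k) := by
        intro k hk
        simp only [Finset.mem_range] at hk
        have hj : m + 1 - k = (m - k) + 1 := by omega
        rw [hj, pascal s (m - k), mul_add]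
      have hfull := ihs (m + 1)
      rw [Finset.sum_range_succ] at hfull
      rw [Finset.sum_range_succ, Finset.sum_congr rfl hterm, Finset.sum_add_distrib, ihm]
      simp only [Nat.sub_self, Nat.choose_zero_right, mul_one] at hfull ⊢
      rw [show r + (s + 1) + m + 1 = r + s + m + 2 by ring,
        show r + (s + 1) + (m + 1) + 1 = (r + s + m + 2) + 1 by ring,
        Nat.choose_succ_succ]
      rw [show r + s + (m + 1) + 1 = r + s + m + 2 by ring] at hfull
      rw [← hfull]
      ring

theorem gould_sum_indep (p n : ℕ) (hn : 1 ≤ n) (hnp : n ≤ p) :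
    (∀ f k : ℕ, (f + k).choose k * k.choose k = (f + k).choose f) ∧
    (∀ f₁ f₂ : ℕ, f₁ ≤ n - 1 → f₂ ≤ n - 1 →
      ∑ k ∈ Finset.range (p - n + 1),
        (f₁ + k).choose k * (p - 1 - f₁ - k).choose (p - n - k)
      = ∑ k ∈ Finset.range (p - n + 1),
        (f₂ + k).choose k * (p - 1 - f₂ - k).choose (p - n - k)) := by
  have main : ∀ f : ℕ, f ≤ n - 1 →
      ∑ k ∈ Finset.range (p - n + 1),
        (f + k).choose k * (p - 1 - f - k).choose (p - n - k) = p.choose (p - n) := by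
    intro f hf
    have h := gould_key f (n - 1 - f) (p - n)
    have heq : ∑ k ∈ Finset.range (p - n + 1),
        (f + k).choose k * (p - 1 - f - k).choose (p - n - k)
        = ∑ k ∈ Finset.range (p - n + 1),
        (f + k).choose k * (n - 1 - f + (p - n - k)).choose (p - n - k) := by
      apply Finset.sum_congr rfl
      intro k hk
      simp only [Finset.mem_range] at hk
      congr 2
      omega
    rw [heq, h]
    congr 1
    omega
  constructor
  · intro f k
    rw [Nat.choose_self, mul_one, Nat.choose_symm_add]
  · intro f₁ f₂ h1 h2
    rw [main f₁ h1, main f₂ h2]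
end

section
/- Let p ≥ 1 and let v : Finset(range p) → ℝ be a cooperative game value function. Define the Shapley value of player j as φ(j) = (1/p) * Σ over subsets F of {0,...,p-1}\{j} of (C(p-1, |F|))⁻¹ * (v(F ∪ {j}) - v(F)). Then the sum over all j of φ(j) equals v(full set) - v(∅). -/
open Finset

lemma coeff_lemma (p s : ℕ) (hp : 1 ≤ p) (hs : s ≤ p) :
    (s : ℝ) * ((1 / (p:ℝ)) * (((p-1).choose (s-1) : ℝ))⁻¹)
      - ((p : ℝ) - (s : ℝ)) * ((1 / (p:ℝ)) * (((p-1).choose s : ℝ))⁻¹)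
    = (if s = p then 1 else 0) - (if s = 0 then 1 else 0) := by
  have hp0 : (p:ℝ) ≠ 0 := Nat.cast_ne_zero.mpr (by omega)
  rcases Nat.eq_zero_or_pos s with h0 | hpos
  · subst h0
    have hpne : ¬ (0 = p) := by omega
    simp [Nat.choose_zero_right, hp0, hpne]
  rcases eq_or_lt_of_le hs with heq | hlt
  · have h1 : (p-1).choose (s-1) = 1 := by rw [heq]; exact Nat.choose_self _
    have h2 : (p:ℝ) - (s:ℝ) = 0 := by rw [heq]; ring
    have h3 : s ≠ 0 := by omega
    rw [h1, h2, heq]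
    have h4 : ¬ (p = 0) := by omega
    simp [hp0, h3, h4]
  · -- 0 < s < p
    have e2 : (s-1) + 1 = s := by omega
    have h1 : p * (p-1).choose (s-1) = p.choose s * s := by
      have := Nat.add_one_mul_choose_eq (p-1) (s-1)
      have e1 : p - 1 + 1 = p := by omega
      rw [e1] at this
      rw [e2] at this
      exact this
    have hb : p * (p-1).choose s = p.choose (s+1) * (s+1) := by
      have := Nat.add_one_mul_choose_eq (p-1) s
      have e1 : p - 1 + 1 = p := by omega
      rwa [e1] at this
    have ha := Nat.choose_succ_right_eq p s
    have h2 : p.choose s * (p - s) = p * (p-1).choose s := by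
      rw [← ha, hb]
    have hc1 : (((p-1).choose (s-1) : ℕ) : ℝ) ≠ 0 := by
      exact_mod_cast (Nat.choose_pos (show s-1 ≤ p-1 by omega)).ne'
    have hc2 : (((p-1).choose s : ℕ) : ℝ) ≠ 0 := by
      exact_mod_cast (Nat.choose_pos (show s ≤ p-1 by omega)).ne'
    have hc3 : ((p.choose s : ℕ) : ℝ) ≠ 0 := by
      exact_mod_cast (Nat.choose_pos hs).ne'
    have H1 : (p:ℝ) * ((p-1).choose (s-1) : ℝ) = (p.choose s : ℝ) * s := by
      exact_mod_cast h1
    have H2 : (p.choose s : ℝ) * ((p:ℝ) - (s:ℝ)) = (p:ℝ) * ((p-1).choose s : ℝ) := by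
      have : ((p - s : ℕ) : ℝ) = (p:ℝ) - s := by
        rw [Nat.cast_sub hs]
      rw [← this]; exact_mod_cast h2
    have hne1 : ¬ (s = p) := by omega
    have hne2 : ¬ (s = 0) := by omega
    rw [if_neg hne1, if_neg hne2]
    have e1 : (s:ℝ) * ((1 / (p:ℝ)) * (((p-1).choose (s-1) : ℝ))⁻¹) = ((p.choose s : ℝ))⁻¹ := by
      field_simp
      linarith [H1]
    have e2' : ((p:ℝ) - (s:ℝ)) * ((1 / (p:ℝ)) * (((p-1).choose s : ℝ))⁻¹) = ((p.choose s : ℝ))⁻¹ := by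
      field_simp
      linarith [H2]
    rw [e1, e2']
    ring

theorem shapley_efficiency (p : ℕ) (hp : 1 ≤ p) (v : Finset ℕ → ℝ) :
    ∑ j ∈ Finset.range p,
      (1 / (p : ℝ)) * ∑ F ∈ ((Finset.range p).erase j).powerset,
        (((p - 1).choose F.card : ℝ))⁻¹ * (v (insert j F) - v F)
    = v (Finset.range p) - v ∅ := by
  set w : ℕ → ℝ := fun k => (1 / (p : ℝ)) * (((p - 1).choose k : ℝ))⁻¹ with hw
  set P := (Finset.range p).powerset with hP
  -- Step 1: split each term
  have step1 : ∀ j, (1 / (p : ℝ)) * ∑ F ∈ ((Finset.range p).erase j).powerset,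
        (((p - 1).choose F.card : ℝ))⁻¹ * (v (insert j F) - v F)
      = (∑ F ∈ ((Finset.range p).erase j).powerset, w F.card * v (insert j F))
        - ∑ F ∈ ((Finset.range p).erase j).powerset, w F.card * v F := by
    intro j
    rw [Finset.mul_sum, ← Finset.sum_sub_distrib]
    refine Finset.sum_congr rfl fun F _ => ?_
    simp only [hw]; ring
  simp only [step1]
  rw [Finset.sum_sub_distrib]
  -- Step 2: reindex the positive part
  have hA : ∀ j ∈ Finset.range p,
      (∑ F ∈ ((Finset.range p).erase j).powerset, w F.card * v (insert j F))
      = ∑ S ∈ P.filter (fun S => j ∈ S), w (S.card - 1) * v S := by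
    intro j hj
    refine Finset.sum_bij' (fun F _ => insert j F) (fun S _ => S.erase j) ?_ ?_ ?_ ?_ ?_
    · intro F hF
      rw [Finset.mem_powerset, Finset.subset_erase] at hF
      simp only [Finset.mem_filter, hP, Finset.mem_powerset]
      exact ⟨Finset.insert_subset hj hF.1, Finset.mem_insert_self _ _⟩
    · intro S hS
      simp only [Finset.mem_filter, hP, Finset.mem_powerset] at hS
      exact Finset.mem_powerset.mpr (Finset.erase_subset_erase _ hS.1)
    · intro F hF
      rw [Finset.mem_powerset, Finset.subset_erase] at hF
      exact Finset.erase_insert hF.2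
    · intro S hS
      simp only [Finset.mem_filter, hP, Finset.mem_powerset] at hS
      exact Finset.insert_erase hS.2
    · intro F hF
      rw [Finset.mem_powerset, Finset.subset_erase] at hF
      rw [Finset.card_insert_of_notMem hF.2]
      simp
  rw [Finset.sum_congr rfl hA]
  -- Step 3: rewrite the negative part's index set
  have hB : ∀ j : ℕ, ((Finset.range p).erase j).powerset = P.filter (fun S => j ∉ S) := by
    intro j
    ext S
    simp [hP, Finset.mem_powerset, Finset.subset_erase, and_comm]
  have hB' : ∀ j ∈ Finset.range p,
      (∑ F ∈ ((Finset.range p).erase j).powerset, w F.card * v F)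
      = ∑ S ∈ P.filter (fun S => j ∉ S), w S.card * v S := by
    intro j _; rw [hB]
  rw [Finset.sum_congr rfl hB']
  -- Step 4: swap sums
  have swapA : ∑ j ∈ Finset.range p, ∑ S ∈ P.filter (fun S => j ∈ S), w (S.card - 1) * v S
      = ∑ S ∈ P, (S.card : ℝ) * (w (S.card - 1) * v S) := by
    simp only [Finset.sum_filter]
    rw [Finset.sum_comm]
    refine Finset.sum_congr rfl fun S hS => ?_
    have hSsub : S ⊆ Finset.range p := Finset.mem_powerset.mp hS
    rw [Finset.sum_ite_mem]
    have : Finset.range p ∩ S = S := Finset.inter_eq_right.mpr hSsub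
    rw [this, Finset.sum_const, nsmul_eq_mul]
  have swapB : ∑ j ∈ Finset.range p, ∑ S ∈ P.filter (fun S => j ∉ S), w S.card * v S
      = ∑ S ∈ P, ((p : ℝ) - S.card) * (w S.card * v S) := by
    simp only [Finset.sum_filter]
    rw [Finset.sum_comm]
    refine Finset.sum_congr rfl fun S hS => ?_
    have hSsub : S ⊆ Finset.range p := Finset.mem_powerset.mp hS
    have hcard : S.card ≤ p := by
      simpa using Finset.card_le_card hSsub
    have : (∑ j ∈ Finset.range p, if j ∉ S then w S.card * v S else 0)
        = ∑ j ∈ (Finset.range p).filter (fun j => j ∉ S), w S.card * v S := by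
      rw [Finset.sum_filter]
    rw [this]
    have hfe : (Finset.range p).filter (fun j => j ∉ S) = Finset.range p \ S := by
      ext x; simp [Finset.mem_sdiff]
    rw [hfe, Finset.sum_const, nsmul_eq_mul, Finset.card_sdiff_of_subset hSsub, Finset.card_range,
      Nat.cast_sub hcard]
  rw [swapA, swapB, ← Finset.sum_sub_distrib]
  -- Step 5: per-set coefficient
  have step5 : ∀ S ∈ P, (S.card : ℝ) * (w (S.card - 1) * v S) - ((p : ℝ) - S.card) * (w S.card * v S)
      = ((if S = Finset.range p then 1 else 0) - (if S = ∅ then 1 else 0)) * v S := by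
    intro S hS
    have hSsub : S ⊆ Finset.range p := Finset.mem_powerset.mp hS
    have hcard : S.card ≤ p := by simpa using Finset.card_le_card hSsub
    have hcoeff := coeff_lemma p S.card hp hcard
    have h1 : (S.card = p) ↔ (S = Finset.range p) := by
      constructor
      · intro h
        exact Finset.eq_of_subset_of_card_le hSsub (by simp [h])
      · intro h; simp [h]
    have h2 : (S.card = 0) ↔ (S = ∅) := Finset.card_eq_zero
    have e : (S.card : ℝ) * (w (S.card - 1) * v S) - ((p : ℝ) - S.card) * (w S.card * v S)
        = ((S.card : ℝ) * (w (S.card - 1)) - ((p : ℝ) - S.card) * (w S.card)) * v S := by ring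
    rw [e]
    congr 1
    simp only [hw]
    rw [hcoeff]
    simp only [h1, h2]
  rw [Finset.sum_congr rfl step5]
  -- Step 6: evaluate
  simp only [sub_mul, one_mul, zero_mul, ite_mul]
  rw [Finset.sum_sub_distrib, Finset.sum_ite_eq' P, Finset.sum_ite_eq' P]
  simp [hP, Finset.empty_mem_powerset, Finset.mem_powerset_self]
end

section
/- Let P = {0, 1, ..., p-1}, j ∈ P, and let w : P → ℝ be a weight function with w(k) = 1 for all k outside a subset S ⊆ P containing j, with |S| = m ≥ 1. Then (1/p) * Σ over F ⊆ P\{j} of C(p-1,|F|)⁻¹ * (w(j) - 1) * Π_{k∈F} w(k) equals (1/m) * Σ over F ⊆ S\{j} of C(m-1,|F|)⁻¹ * (w(j) - 1) * Π_{k∈F} w(k). -/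
lemma keyNat (p n : ℕ) :
    (p+2) * ((p+1).choose n) * ((p+1).choose (n+1)) =
    (p+1) * (p.choose n) * ((p+2).choose (n+1)) := by
  have h1 := Nat.add_one_mul_choose_eq p n
  have h2 := Nat.add_one_mul_choose_eq (p+1) n
  calc (p+2) * ((p+1).choose n) * ((p+1).choose (n+1))
      = ((p+2).choose (n+1) * (n+1)) * ((p+1).choose (n+1)) := by rw [← h2]
    _ = ((p+1).choose (n+1) * (n+1)) * ((p+2).choose (n+1)) := by ring
    _ = (p+1) * (p.choose n) * ((p+2).choose (n+1)) := by rw [← h1]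

lemma keyReal (p n : ℕ) (hn : n ≤ p) :
    ((((p:ℝ)+1) * (p.choose n))⁻¹ : ℝ) =
    (((p:ℝ)+2) * ((p+1).choose n))⁻¹ + (((p:ℝ)+2) * ((p+1).choose (n+1)))⁻¹ := by
  have c1 : (0:ℝ) < (p.choose n : ℝ) := by exact_mod_cast Nat.choose_pos hn
  have c2 : (0:ℝ) < ((p+1).choose n : ℝ) := by
    exact_mod_cast Nat.choose_pos (hn.trans (Nat.le_succ p))
  have c3 : (0:ℝ) < ((p+1).choose (n+1) : ℝ) := by
    exact_mod_cast Nat.choose_pos (Nat.succ_le_succ hn)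
  have hp : (0:ℝ) < (p:ℝ)+1 := by positivity
  have hp2 : (0:ℝ) < (p:ℝ)+2 := by positivity
  have pascal : ((p+2).choose (n+1) : ℝ) = ((p+1).choose n : ℝ) + ((p+1).choose (n+1) : ℝ) := by
    exact_mod_cast (Nat.choose_succ_succ (p+1) n)
  have hN : ((p:ℝ)+2) * ((p+1).choose n : ℝ) * ((p+1).choose (n+1) : ℝ) =
      ((p:ℝ)+1) * (p.choose n : ℝ) * (((p+1).choose n : ℝ) + ((p+1).choose (n+1) : ℝ)) := by
    rw [← pascal]
    exact_mod_cast keyNat p n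
  field_simp
  nlinarith [hN]

lemma sum_pascal (q : ℕ) (a : ℕ → ℝ) :
    ∑ k ∈ Finset.range (q+2), ((q+1).choose k : ℝ) * a k
      = ∑ k ∈ Finset.range (q+1), (q.choose k : ℝ) * (a k + a (k+1)) := by
  rw [Finset.sum_range_succ' _ (q+1)]
  have h : ∀ k ∈ Finset.range (q+1), ((q+1).choose (k+1) : ℝ) * a (k+1)
      = (q.choose k : ℝ) * a (k+1) + (q.choose (k+1) : ℝ) * a (k+1) := by
    intro k _
    have : ((q+1).choose (k+1) : ℝ) = (q.choose k : ℝ) + (q.choose (k+1) : ℝ) := by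
      exact_mod_cast Nat.choose_succ_succ q k
    rw [this]; ring
  rw [Finset.sum_congr rfl h, Finset.sum_add_distrib]
  have h2 : ∑ k ∈ Finset.range (q+1), (q.choose (k+1) : ℝ) * a (k+1)
      = ∑ k ∈ Finset.range (q+1), (q.choose k : ℝ) * a k - (q.choose 0 : ℝ) * a 0 := by
    have := Finset.sum_range_succ' (fun k => (q.choose k : ℝ) * a k) q
    have h3 : ∑ k ∈ Finset.range (q+1), (q.choose k : ℝ) * a k
        = ∑ k ∈ Finset.range q, (q.choose (k+1) : ℝ) * a (k+1) + (q.choose 0 : ℝ) * a 0 := this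
    rw [Finset.sum_range_succ (fun k => (q.choose (k+1) : ℝ) * a (k+1)) q]
    rw [h3]
    simp [Nat.choose_succ_self]
  rw [h2]
  simp only [Nat.choose_zero_right, Nat.cast_one, one_mul]
  have : ∑ k ∈ Finset.range (q+1), (q.choose k : ℝ) * (a k + a (k+1))
      = ∑ k ∈ Finset.range (q+1), (q.choose k : ℝ) * a k
        + ∑ k ∈ Finset.range (q+1), (q.choose k : ℝ) * a (k+1) := by
    rw [← Finset.sum_add_distrib]; apply Finset.sum_congr rfl; intro k _; ring
  rw [this]; ring

lemma prop1 (m' : ℕ) : ∀ q f : ℕ, f ≤ m' →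
    ∑ k ∈ Finset.range (q+1),
      (q.choose k : ℝ) * (((m':ℝ)+q+1) * ((m'+q).choose (f+k)))⁻¹
    = (((m':ℝ)+1) * (m'.choose f))⁻¹ := by
  intro q
  induction q with
  | zero => intro f hf; simp
  | succ q ih =>
    intro f hf
    have := sum_pascal q (fun k => (((m':ℝ)+((q+1:ℕ):ℝ)+1) * (((m'+(q+1)).choose (f+k) : ℕ):ℝ))⁻¹)
    rw [show q+1+1 = q+2 from rfl]
    rw [this]
    have step : ∀ k ∈ Finset.range (q+1),
        (q.choose k : ℝ) * ((((m':ℝ)+((q+1:ℕ):ℝ)+1) * (((m'+(q+1)).choose (f+k) : ℕ):ℝ))⁻¹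
          + (((m':ℝ)+((q+1:ℕ):ℝ)+1) * (((m'+(q+1)).choose (f+(k+1)) : ℕ):ℝ))⁻¹)
        = (q.choose k : ℝ) * (((m':ℝ)+q+1) * ((m'+q).choose (f+k)))⁻¹ := by
      intro k hk
      congr 1
      have hle : f + k ≤ m' + q := by
        have := Finset.mem_range.mp hk
        omega
      have := keyReal (m'+q) (f+k) hle
      push_cast at this ⊢
      rw [show f + (k+1) = f + k + 1 by ring]
      rw [show m' + (q+1) = m' + q + 1 by ring]
      rw [show ((m':ℝ) + ((q:ℝ)+1) + 1) = (m':ℝ) + (q:ℝ) + 2 by ring]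
      exact this.symm
    rw [Finset.sum_congr rfl step]
    exact ih f hf

lemma sum_powerset_disjUnion {α : Type*} [DecidableEq α] (A B : Finset α)
    (h : Disjoint A B) (f : Finset α → ℝ) :
    ∑ F ∈ (A ∪ B).powerset, f F = ∑ a ∈ A.powerset, ∑ b ∈ B.powerset, f (a ∪ b) := by
  rw [← Finset.sum_product' A.powerset B.powerset (fun a b => f (a ∪ b))]
  refine Finset.sum_nbij' (fun F => (F ∩ A, F ∩ B)) (fun x => x.1 ∪ x.2) ?_ ?_ ?_ ?_ ?_
  · intro F hF
    simp only [Finset.mem_product, Finset.mem_powerset] at *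
    exact ⟨Finset.inter_subset_right, Finset.inter_subset_right⟩
  · intro x hx
    simp only [Finset.mem_product, Finset.mem_powerset] at *
    exact Finset.union_subset_union hx.1 hx.2
  · intro F hF
    simp only [Finset.mem_powerset] at hF
    dsimp only
    rw [← Finset.inter_union_distrib_left]
    exact Finset.inter_eq_left.mpr hF
  · intro x hx
    simp only [Finset.mem_product, Finset.mem_powerset] at hx
    have h1 : (x.1 ∪ x.2) ∩ A = x.1 := by
      rw [Finset.union_inter_distrib_right, Finset.inter_eq_left.mpr hx.1,
        Finset.disjoint_iff_inter_eq_empty.mp (h.symm.mono_left hx.2), Finset.union_empty]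
    have h2 : (x.1 ∪ x.2) ∩ B = x.2 := by
      rw [Finset.union_inter_distrib_right, Finset.inter_eq_left.mpr hx.2,
        Finset.disjoint_iff_inter_eq_empty.mp (h.mono_left hx.1), Finset.empty_union]
    simp [h1, h2]
  · intro F hF
    congr 1
    simp only [Finset.mem_powerset] at hF
    rw [← Finset.inter_union_distrib_left]
    exact (Finset.inter_eq_left.mpr hF).symm

theorem qshap_dimension_reduction (p m j : ℕ) (S : Finset ℕ) (w : ℕ → ℝ)
    (hS : S ⊆ Finset.range p) (hj : j ∈ S) (hcard : S.card = m) (hm : 1 ≤ m)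
    (hw : ∀ k ∈ Finset.range p, k ∉ S → w k = 1) :
    (1 / (p : ℝ)) * ∑ F ∈ ((Finset.range p).erase j).powerset,
      (((p - 1).choose F.card : ℝ))⁻¹ * (w j - 1) * ∏ k ∈ F, w k
    = (1 / (m : ℝ)) * ∑ F ∈ (S.erase j).powerset,
      (((m - 1).choose F.card : ℝ))⁻¹ * (w j - 1) * ∏ k ∈ F, w k := by
  classical
  obtain ⟨m', rfl⟩ : ∃ m', m = m' + 1 := ⟨m - 1, by omega⟩
  set T := Finset.range p \ S with hT
  have hmp : m' + 1 ≤ p := by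
    have := Finset.card_le_card hS
    rwa [hcard, Finset.card_range] at this
  have hqcard : T.card = p - (m' + 1) := by
    rw [hT, Finset.card_sdiff_of_subset hS, hcard, Finset.card_range]
  set q := p - (m' + 1) with hqdef
  have hp : p = m' + 1 + q := by omega
  have hdisj : Disjoint (S.erase j) T := by
    rw [Finset.disjoint_left]
    intro k hk hk'
    exact (Finset.mem_sdiff.mp hk').2 (Finset.mem_of_mem_erase hk)
  have hun : (Finset.range p).erase j = (S.erase j) ∪ T := by
    ext k
    simp only [Finset.mem_erase, Finset.mem_union, Finset.mem_sdiff, Finset.mem_range, hT]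
    constructor
    · rintro ⟨hkj, hkp⟩
      by_cases hkS : k ∈ S
      · exact Or.inl ⟨hkj, hkS⟩
      · exact Or.inr ⟨hkp, hkS⟩
    · rintro (⟨hkj, hkS⟩ | ⟨hkp, hkS⟩)
      · exact ⟨hkj, Finset.mem_range.mp (hS hkS)⟩
      · exact ⟨fun h => hkS (h ▸ hj), hkp⟩
  have hcardE : (S.erase j).card = m' := by
    rw [Finset.card_erase_of_mem hj, hcard]
    omega
  rw [hun, sum_powerset_disjUnion _ _ hdisj, Finset.mul_sum, Finset.mul_sum]
  apply Finset.sum_congr rfl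
  intro a ha
  have haS : a ⊆ S.erase j := Finset.mem_powerset.mp ha
  have hfa : a.card ≤ m' := hcardE ▸ Finset.card_le_card haS
  have hb : ∀ b ∈ T.powerset,
      (((p - 1).choose (a ∪ b).card : ℝ))⁻¹ * (w j - 1) * ∏ k ∈ a ∪ b, w k
      = (((p - 1).choose (a.card + b.card) : ℝ))⁻¹ * ((w j - 1) * ∏ k ∈ a, w k) := by
    intro b hbm
    have hbT : b ⊆ T := Finset.mem_powerset.mp hbm
    have hab : Disjoint a b := (hdisj.mono haS hbT)
    rw [Finset.card_union_of_disjoint hab, Finset.prod_union hab]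
    have : ∏ k ∈ b, w k = 1 := by
      apply Finset.prod_eq_one
      intro k hk
      have hkT := hbT hk
      rw [hT, Finset.mem_sdiff] at hkT
      exact hw k hkT.1 hkT.2
    rw [this, mul_one]
    ring
  rw [Finset.sum_congr rfl hb, ← Finset.sum_mul]
  have hSsum : (1 / (p : ℝ)) * (∑ b ∈ T.powerset, (((p - 1).choose (a.card + b.card) : ℝ))⁻¹)
      = (((m' : ℝ) + 1) * (m'.choose a.card : ℝ))⁻¹ := by
    rw [Finset.sum_powerset]
    have inner : ∀ i ∈ Finset.range (T.card + 1),
        ∑ t ∈ Finset.powersetCard i T, (((p - 1).choose (a.card + t.card) : ℝ))⁻¹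
        = (q.choose i : ℝ) * (((p - 1).choose (a.card + i) : ℝ))⁻¹ := by
      intro i _
      have := Finset.sum_powersetCard i T (fun c => (((p - 1).choose (a.card + c) : ℝ))⁻¹)
      rw [this, nsmul_eq_mul, hqcard]
    rw [Finset.sum_congr rfl inner, hqcard]
    have key := prop1 m' q a.card hfa
    have e1 : p - 1 = m' + q := by omega
    have e2 : (p : ℝ) = (m' : ℝ) + q + 1 := by
      rw [hp]; push_cast; ring
    rw [e1, e2, Finset.mul_sum, ← key]
    apply Finset.sum_congr rfl
    intro i _
    rw [mul_inv]
    ring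
  calc (1 / (p : ℝ)) * ((∑ b ∈ T.powerset, (((p - 1).choose (a.card + b.card) : ℝ))⁻¹)
        * ((w j - 1) * ∏ k ∈ a, w k))
      = ((1 / (p : ℝ)) * ∑ b ∈ T.powerset, (((p - 1).choose (a.card + b.card) : ℝ))⁻¹)
        * ((w j - 1) * ∏ k ∈ a, w k) := by ring
    _ = (((m' : ℝ) + 1) * (m'.choose a.card : ℝ))⁻¹ * ((w j - 1) * ∏ k ∈ a, w k) := by
        rw [hSsum]
    _ = (1 / ((m' + 1 : ℕ) : ℝ)) * ((((m' + 1 - 1).choose a.card : ℝ))⁻¹ * (w j - 1)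
        * ∏ k ∈ a, w k) := by
        simp only [Nat.add_sub_cancel]
        push_cast
        rw [mul_inv]
        ring
end
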